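/- Let G be a compact Hausdorff topological group with normalized Haar measure and x₀ ∈ G. For continuous F : G×G → ℂ define F*(x,y) := conj(F(y⁻¹xy, y⁻¹)) and (τ(F)φ)(x) := ∫_G F(x x₀ x⁻¹, z) φ(z⁻¹x) dz for continuous φ : G → ℂ. Then for all continuous φ, ψ : G → ℂ: ∫_G (τ(F*)φ)(x) · conj(ψ(x)) dx = ∫_G φ(x) · conj((τ(F)ψ)(x)) dx; that is, τ(F*) is the formal adjoint of τ(F) with respect to the L² inner product of Haar measure. -/

import Mathlib

open MeasureTheory

/-- The involution `F*(x, y) = conj (F (y⁻¹xy, y⁻¹))` on `C(G × G)`. -/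
noncomputable def qdStar {G : Type*} [Group G] (F : G × G → ℂ) : G × G → ℂ :=
  fun p => (starRingEnd ℂ) (F (p.2⁻¹ * p.1 * p.2, p.2⁻¹))

/-- The operator `(τ(F)φ)(x) = ∫_G F(x x₀ x⁻¹, z) φ(z⁻¹ x) dz`. -/
noncomputable def tauOp {G : Type*} [Group G] [TopologicalSpace G]
    [MeasurableSpace G] (μ : Measure G) (x₀ : G) (F : G × G → ℂ) (φ : G → ℂ) :
    G → ℂ :=
  fun x => ∫ z, F (x * x₀ * x⁻¹, z) * φ (z⁻¹ * x) ∂μ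

/-- A Haar probability measure on a compact group is right invariant. -/
lemma haar_right_invariant {G : Type*} [Group G] [TopologicalSpace G] [IsTopologicalGroup G]
    [CompactSpace G] [T2Space G] [MeasurableSpace G] [BorelSpace G]
    (μ : Measure G) [μ.IsHaarMeasure] [IsProbabilityMeasure μ] :
    μ.IsMulRightInvariant := by
  constructor
  intro g
  haveI : IsProbabilityMeasure (Measure.map (· * g) μ) :=
    Measure.isProbabilityMeasure_map (measurable_mul_const g).aemeasurable
  exact Measure.isHaarMeasure_eq_of_isProbabilityMeasure _ μ

/-- A Haar probability measure on a compact group is inversion invariant. -/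
lemma haar_inv_invariant {G : Type*} [Group G] [TopologicalSpace G] [IsTopologicalGroup G]
    [CompactSpace G] [T2Space G] [MeasurableSpace G] [BorelSpace G]
    (μ : Measure G) [μ.IsHaarMeasure] [IsProbabilityMeasure μ] :
    μ.IsInvInvariant := by
  haveI := haar_right_invariant μ
  haveI : IsProbabilityMeasure μ.inv :=
    Measure.isProbabilityMeasure_map measurable_inv.aemeasurable
  haveI : μ.inv.IsHaarMeasure :=
    { toIsMulLeftInvariant := inferInstance
      lt_top_of_isCompact := fun K _ => measure_lt_top _ K
      toIsOpenPosMeasure := inferInstance }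
  exact ⟨Measure.isHaarMeasure_eq_of_isProbabilityMeasure μ.inv μ⟩

theorem stmt_7 {G : Type*} [Group G] [TopologicalSpace G] [IsTopologicalGroup G]
    [CompactSpace G] [T2Space G] [MeasurableSpace G] [BorelSpace G]
    -- normalized Haar measure:
    (μ : Measure G) [μ.IsHaarMeasure] [IsProbabilityMeasure μ]
    (x₀ : G) (F : G × G → ℂ) (φ ψ : G → ℂ)
    (hF : Continuous F) (hφ : Continuous φ) (hψ : Continuous ψ) :
    ∫ x, tauOp μ x₀ (qdStar F) φ x * (starRingEnd ℂ) (ψ x) ∂μ =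
      ∫ x, φ x * (starRingEnd ℂ) (tauOp μ x₀ F ψ x) ∂μ := by
  haveI := haar_inv_invariant μ
  set c := starRingEnd ℂ with hc
  -- the three integrands
  set A : G → G → ℂ := fun x z =>
    c (F (z⁻¹ * (x * x₀ * x⁻¹) * z, z⁻¹)) * φ (z⁻¹ * x) * c (ψ x) with hA
  set B : G → G → ℂ := fun x z =>
    c (F (x * x₀ * x⁻¹, z⁻¹)) * φ x * c (ψ (z * x)) with hB
  set C : G → G → ℂ := fun x z =>
    c (F (x * x₀ * x⁻¹, z)) * φ x * c (ψ (z⁻¹ * x)) with hC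
  have hAc : Continuous (Function.uncurry A) := by
    apply Continuous.mul
    apply Continuous.mul
    · exact Complex.continuous_conj.comp (hF.comp (by continuity))
    · exact hφ.comp (by continuity)
    · exact Complex.continuous_conj.comp (hψ.comp continuous_fst)
  have hBc : Continuous (Function.uncurry B) := by
    apply Continuous.mul
    apply Continuous.mul
    · exact Complex.continuous_conj.comp (hF.comp (by continuity))
    · exact hφ.comp continuous_fst
    · exact Complex.continuous_conj.comp (hψ.comp (by continuity))
  calc
    ∫ x, tauOp μ x₀ (qdStar F) φ x * c (ψ x) ∂μ
        = ∫ x, ∫ z, A x z ∂μ ∂μ := by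
          simp only [tauOp, qdStar, hA]
          congr 1 with x
          rw [← integral_mul_const]
    _ = ∫ z, ∫ x, A x z ∂μ ∂μ :=
          integral_integral_swap_of_hasCompactSupport hAc
            (HasCompactSupport.of_compactSpace _)
    _ = ∫ z, ∫ x, B x z ∂μ ∂μ := by
          congr 1 with z
          rw [← integral_mul_left_eq_self (fun x => A x z) z]
          congr 1 with x
          simp only [hA, hB]
          congr 2
          · congr 2
            group
          · congr 1
            group
    _ = ∫ x, ∫ z, B x z ∂μ ∂μ :=
          (integral_integral_swap_of_hasCompactSupport hBc
            (HasCompactSupport.of_compactSpace _)).symm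
    _ = ∫ x, ∫ z, C x z ∂μ ∂μ := by
          congr 1 with x
          rw [← integral_inv_eq_self (fun z => C x z) μ]
          congr 1 with z
          simp only [hB, hC, inv_inv]
    _ = ∫ x, φ x * c (tauOp μ x₀ F ψ x) ∂μ := by
          congr 1 with x
          simp only [tauOp, hC]
          rw [← integral_conj]
          rw [← integral_const_mul]
          congr 1 with z
          simp only [map_mul]
          ring
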